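/- arXiv:2310.14647 — 2 statements merged into one kernel-verified Lean document; each statement's English description precedes it below -/
import Mathlib

section
/- Let G be a graph with minimum degree δ and order n with n ≥ 2δ + 2. Then γᵢ(G) = n − δ if and only if G contains a spanning complete bipartite subgraph K_{δ, n−δ} such that the part of the bipartition of size n − δ is an independent set in G. -/
open Finset

open scoped Classical

noncomputable section

namespace IndicatedDom

variable {V : Type*} [Fintype V]

/-- Closed neighborhood `N[v]` as a `Finset`. -/
def cnbhd (G : SimpleGraph V) (v : V) : Finset V :=
  insert v (G.neighborFinset v)

/-- `D` is a dominating set of `G`. -/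
def Dominates (G : SimpleGraph V) (D : Finset V) : Prop :=
  ∀ u, ∃ v ∈ D, u ∈ cnbhd G v

/-- The set of vertices not dominated by `D`. -/
def undom (G : SimpleGraph V) (D : Finset V) : Finset V :=
  univ.filter fun u => ∀ v ∈ D, u ∉ cnbhd G v

/-- Game value of the indicated domination game with a fuel parameter:
given the set `D` of vertices selected so far, Dominator indicates an
undominated vertex `u` (minimizing), Staller selects a vertex of `N[u]`
(maximizing); each selection counts one. -/
def giAux (G : SimpleGraph V) : ℕ → Finset V → ℕ
  | 0, _ => 0
  | (fuel+1), D =>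
    if h : (undom G D).Nonempty then
      (undom G D).inf' h fun u =>
        (cnbhd G u).sup' ⟨u, Finset.mem_insert_self u _⟩ fun v => giAux G fuel (insert v D) + 1
    else 0

/-- The indicated domination number `γᵢ(G)`. -/
def indicatedDomNum (G : SimpleGraph V) : ℕ :=
  giAux G (Fintype.card V) ∅

/-- Game value of the standard domination game with a fuel parameter:
`dom = true` means it is Dominator's turn (minimizing); legal moves are
vertices dominating at least one new vertex. -/
def gameAux (G : SimpleGraph V) : ℕ → Bool → Finset V → ℕ
  | 0, _, _ => 0
  | (fuel+1), dom, D =>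
    if h : (univ.filter fun v => ∃ u ∈ cnbhd G v, u ∈ undom G D).Nonempty then
      if dom then
        (univ.filter fun v => ∃ u ∈ cnbhd G v, u ∈ undom G D).inf' h
          fun v => gameAux G fuel false (insert v D) + 1
      else
        (univ.filter fun v => ∃ u ∈ cnbhd G v, u ∈ undom G D).sup' h
          fun v => gameAux G fuel true (insert v D) + 1
    else 0

/-- The game domination number `γ_g(G)` (Dominator starts). -/
def gameDomNum (G : SimpleGraph V) : ℕ :=
  gameAux G (Fintype.card V) true ∅

/-- A minimal dominating set. -/
def IsMinimalDominating (G : SimpleGraph V) (D : Finset V) : Prop :=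
  Dominates G D ∧ ∀ D' ⊂ D, ¬ Dominates G D'

/-- The upper domination number `Γ(G)`. -/
def upperDomNum (G : SimpleGraph V) : ℕ :=
  sSup {k | ∃ D : Finset V, IsMinimalDominating G D ∧ D.card = k}

/-- A dominating (Grundy) sequence: every vertex dominates something new,
and the whole sequence dominates `G`. -/
def IsDominatingSeq (G : SimpleGraph V) (l : List V) : Prop :=
  (∀ i : Fin l.length, ∃ u, u ∈ cnbhd G (l.get i) ∧
      ∀ j : Fin l.length, (j : ℕ) < (i : ℕ) → u ∉ cnbhd G (l.get j)) ∧
    Dominates G l.toFinset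

/-- The Grundy domination number `γ_gr(G)`. -/
def grundyDomNum (G : SimpleGraph V) : ℕ :=
  sSup {k | ∃ l : List V, IsDominatingSeq G l ∧ l.length = k}

/-- The independence number `α(G)`. -/
def indepNum (G : SimpleGraph V) : ℕ :=
  sSup {k | ∃ S : Finset V, (∀ x ∈ S, ∀ y ∈ S, ¬ G.Adj x y) ∧ S.card = k}

/-- `S` is irredundant: every `x ∈ S` has a private neighbor w.r.t. `S`. -/
def Irredundant (G : SimpleGraph V) (S : Finset V) : Prop :=
  ∀ x ∈ S, ∃ w, (∃ v ∈ S, w ∈ cnbhd G v) ∧ ¬ ∃ v ∈ S.erase x, w ∈ cnbhd G v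

/-- The upper irredundance number `IR(G)`. -/
def upperIrredNum (G : SimpleGraph V) : ℕ :=
  sSup {k | ∃ S : Finset V, Irredundant G S ∧ (∀ T, S ⊂ T → ¬ Irredundant G T) ∧ S.card = k}

/-- The star `K_{1,n}` with center `0`. -/
def starGraph (n : ℕ) : SimpleGraph (Fin (n+1)) where
  Adj a b := a ≠ b ∧ (a = 0 ∨ b = 0)
  symm := by constructor; intro a b h; exact ⟨h.1.symm, h.2.symm⟩
  loopless := by constructor; intro a h; exact h.1 rfl

/-- Two copies of `K_n` with a matching joining corresponding vertices of
index `≥ 1` (i.e. `K_n □ K₂` minus the matching edge at index `0`). -/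
def Hgraph (n : ℕ) : SimpleGraph (Fin n × Bool) where
  Adj a b := (a.2 = b.2 ∧ a.1 ≠ b.1) ∨ (a.2 ≠ b.2 ∧ a.1 = b.1 ∧ (a.1 : ℕ) ≠ 0)
  symm := by
    constructor
    rintro ⟨i, s⟩ ⟨j, t⟩ (⟨h1, h2⟩ | ⟨h1, h2, h3⟩)
    · exact Or.inl ⟨h1.symm, h2.symm⟩
    · exact Or.inr ⟨h1.symm, h2.symm, h2 ▸ h3⟩
  loopless := by constructor; rintro ⟨i, s⟩ (⟨_, h⟩ | ⟨h, _⟩) <;> exact h rfl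

/-- The `k`-th power of the path on `n` vertices: `i ~ j` iff `1 ≤ |i-j| ≤ k`. -/
def pathPow (n k : ℕ) : SimpleGraph (Fin n) where
  Adj i j := i ≠ j ∧ (i : ℕ) ≤ (j : ℕ) + k ∧ (j : ℕ) ≤ (i : ℕ) + k
  symm := by constructor; intro i j h; exact ⟨h.1.symm, h.2.2, h.2.1⟩
  loopless := by constructor; intro i h; exact h.1 rfl

/-- The cycle on `m` vertices (for `m ≥ 3`), modeled on `ZMod m`. -/
def cyc (m : ℕ) : SimpleGraph (ZMod m) where
  Adj i j := i ≠ j ∧ (i + 1 = j ∨ j + 1 = i)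
  symm := by constructor; intro i j h; exact ⟨h.1.symm, h.2.symm⟩
  loopless := by constructor; intro i h; exact h.1 rfl

/-- The graph `D₁`: a `9`-cycle `x₁x₂…x₉` plus chords `x₁x₃, x₄x₆, x₇x₉`
(vertex `xᵢ` is represented by `i - 1 : ZMod 9`). -/
def DGraph : SimpleGraph (ZMod 9) where
  Adj i j := i ≠ j ∧ (i + 1 = j ∨ j + 1 = i ∨
    (i = 0 ∧ j = 2) ∨ (i = 2 ∧ j = 0) ∨ (i = 3 ∧ j = 5) ∨ (i = 5 ∧ j = 3) ∨
    (i = 6 ∧ j = 8) ∨ (i = 8 ∧ j = 6))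
  symm := by constructor; intro i j h; refine ⟨h.1.symm, ?_⟩; tauto
  loopless := by constructor; intro i h; exact h.1 rfl


section Stmt4Aux

variable {G : SimpleGraph V}

lemma mem_cnbhd {u v : V} : u ∈ cnbhd G v ↔ u = v ∨ G.Adj v u := by
  simp [cnbhd]

lemma self_mem_cnbhd (G : SimpleGraph V) (v : V) : v ∈ cnbhd G v :=
  Finset.mem_insert_self _ _

lemma cnbhd_comm {u v : V} : u ∈ cnbhd G v ↔ v ∈ cnbhd G u := by
  simp only [mem_cnbhd]
  constructor
  · rintro (rfl | h)
    · exact Or.inl rfl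
    · exact Or.inr h.symm
  · rintro (rfl | h)
    · exact Or.inl rfl
    · exact Or.inr h.symm

lemma card_cnbhd (G : SimpleGraph V) (v : V) :
    (cnbhd G v).card = G.degree v + 1 := by
  rw [cnbhd, card_insert_of_notMem (by simp), SimpleGraph.card_neighborFinset_eq_degree]

lemma mem_undom {u : V} {D : Finset V} :
    u ∈ undom G D ↔ ∀ v ∈ D, u ∉ cnbhd G v := by
  simp [undom]

lemma undom_empty (G : SimpleGraph V) : undom G (∅ : Finset V) = univ := by
  ext u; simp [undom]

lemma undom_insert (G : SimpleGraph V) (w : V) (D : Finset V) :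
    undom G (insert w D) = undom G D \ cnbhd G w := by
  ext u
  simp only [undom, mem_filter, mem_univ, true_and, mem_sdiff, Finset.mem_insert]
  constructor
  · intro hu
    exact ⟨fun v hv => hu v (Or.inr hv), hu w (Or.inl rfl)⟩
  · rintro ⟨h1, h2⟩ v hv
    rcases hv with rfl | hv
    · exact h2
    · exact h1 v hv

lemma giAux_le_card (G : SimpleGraph V) (fuel : ℕ) :
    ∀ D : Finset V, giAux G fuel D ≤ (undom G D).card := by
  induction fuel with
  | zero => intro D; simp [giAux]
  | succ fuel ih =>
    intro D
    rw [giAux]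
    split_ifs with hne
    · obtain ⟨u, hu⟩ := hne
      refine le_trans (inf'_le _ hu) (Finset.sup'_le _ _ ?_)
      intro v hv
      have hu' : u ∈ cnbhd G v := cnbhd_comm.mp hv
      have hss : undom G (insert v D) ⊂ undom G D := by
        rw [undom_insert]
        refine (Finset.ssubset_iff_of_subset (sdiff_subset)).mpr ⟨u, hu, ?_⟩
        rw [mem_sdiff]
        intro hc
        exact hc.2 hu'
      have h1 := ih (insert v D)
      have h2 := card_lt_card hss
      omega
    · exact Nat.zero_le _

lemma card_le_giAux (G : SimpleGraph V) (fuel : ℕ) :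
    ∀ D : Finset V, (undom G D).card ≤ fuel →
    (∀ u ∈ undom G D, ∃ v ∈ cnbhd G u, cnbhd G v ∩ undom G D = {u}) →
    (undom G D).card ≤ giAux G fuel D := by
  induction fuel with
  | zero => intro D hcard _; simpa [giAux] using hcard
  | succ fuel ih =>
    intro D hcard hR
    rw [giAux]
    split_ifs with hne
    · apply Finset.le_inf'
      intro u hu
      obtain ⟨v, hv, hvU⟩ := hR u hu
      have hins : undom G (insert v D) = (undom G D).erase u := by
        rw [undom_insert]
        ext x
        simp only [mem_sdiff, mem_erase]
        constructor
        · rintro ⟨hxU, hxn⟩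
          refine ⟨fun hxu => hxn ?_, hxU⟩
          have hmem : u ∈ cnbhd G v ∩ undom G D := by
            rw [hvU]; exact Finset.mem_singleton_self u
          rw [hxu]
          exact (Finset.mem_inter.mp hmem).1
        · rintro ⟨hxu, hxU⟩
          refine ⟨hxU, fun hxc => hxu ?_⟩
          have : x ∈ cnbhd G v ∩ undom G D := Finset.mem_inter.mpr ⟨hxc, hxU⟩
          rw [hvU] at this
          exact Finset.mem_singleton.mp this
      have hcard' : (undom G (insert v D)).card = (undom G D).card - 1 := by
        rw [hins, card_erase_of_mem hu]
      have hR' : ∀ u' ∈ undom G (insert v D), ∃ w ∈ cnbhd G u',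
          cnbhd G w ∩ undom G (insert v D) = {u'} := by
        intro u' hu'
        have hu'2 := hu'
        rw [hins] at hu'2
        obtain ⟨hne', hu'U⟩ := Finset.mem_erase.mp hu'2
        obtain ⟨w, hw, hwU⟩ := hR u' hu'U
        refine ⟨w, hw, ?_⟩
        rw [hins]
        ext x
        simp only [Finset.mem_inter, mem_erase, Finset.mem_singleton]
        constructor
        · rintro ⟨hxc, hxu, hxU⟩
          have : x ∈ cnbhd G w ∩ undom G D := Finset.mem_inter.mpr ⟨hxc, hxU⟩
          rw [hwU] at this
          exact Finset.mem_singleton.mp this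
        · intro hxe
          have hmem : u' ∈ cnbhd G w ∩ undom G D := by
            rw [hwU]; exact Finset.mem_singleton_self _
          obtain ⟨h1, h2⟩ := Finset.mem_inter.mp hmem
          rw [hxe]
          exact ⟨h1, hne', h2⟩
      have hupos : 1 ≤ (undom G D).card := card_pos.mpr ⟨u, hu⟩
      have hkey := ih (insert v D) (by omega) hR'
      have : (undom G D).card ≤ giAux G fuel (insert v D) + 1 := by omega
      exact this.trans (Finset.le_sup' (fun v => giAux G fuel (insert v D) + 1) hv)
    · rw [not_nonempty_iff_eq_empty] at hne
      simp [hne]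

lemma full_imp_R (G : SimpleGraph V) (fuel : ℕ) (D : Finset V)
    (hne : (undom G D).Nonempty)
    (hfull : (undom G D).card ≤ giAux G (fuel + 1) D) :
    ∀ u ∈ undom G D, ∃ v ∈ cnbhd G u, cnbhd G v ∩ undom G D = {u} := by
  intro u hu
  rw [giAux, dif_pos hne] at hfull
  have h1 : (undom G D).card ≤
      (cnbhd G u).sup' ⟨u, Finset.mem_insert_self u _⟩
        (fun v => giAux G fuel (insert v D) + 1) :=
    hfull.trans (inf'_le _ hu)
  obtain ⟨v, hv, hveq⟩ := Finset.exists_mem_eq_sup'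
    (⟨u, self_mem_cnbhd G u⟩ : (cnbhd G u).Nonempty)
    (fun v => giAux G fuel (insert v D) + 1)
  rw [hveq] at h1
  have hle := giAux_le_card G fuel (insert v D)
  have hu' : u ∈ cnbhd G v := cnbhd_comm.mp hv
  have hsub : undom G (insert v D) ⊆ (undom G D).erase u := by
    rw [undom_insert]
    intro x hx
    rw [mem_sdiff] at hx
    rw [mem_erase]
    refine ⟨?_, hx.1⟩
    rintro rfl
    exact hx.2 hu'
  have hcard2 : ((undom G D).erase u).card = (undom G D).card - 1 :=
    card_erase_of_mem hu
  have hcard3 := card_le_card hsub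
  have hupos : 1 ≤ (undom G D).card := card_pos.mpr ⟨u, hu⟩
  have heqcard : ((undom G D).erase u).card ≤ (undom G (insert v D)).card := by
    omega
  have hset : undom G (insert v D) = (undom G D).erase u :=
    Finset.eq_of_subset_of_card_le hsub heqcard
  refine ⟨v, hv, ?_⟩
  ext x
  simp only [Finset.mem_inter, Finset.mem_singleton]
  constructor
  · rintro ⟨hxc, hxU⟩
    by_contra hxu
    have hxm : x ∈ (undom G D).erase u := Finset.mem_erase.mpr ⟨hxu, hxU⟩
    rw [← hset, undom_insert, mem_sdiff] at hxm
    exact hxm.2 hxc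
  · intro hxe
    rw [hxe]
    exact ⟨hu', hu⟩

/-- The combinatorial core of the forward direction. -/
lemma combinatorial (G : SimpleGraph V) (v₁ : V)
    (h : 2 * G.minDegree + 2 ≤ Fintype.card V)
    (hdeg : G.degree v₁ = G.minDegree)
    (hR : ∀ u ∈ univ \ cnbhd G v₁, ∃ v ∈ cnbhd G u,
        cnbhd G v ∩ (univ \ cnbhd G v₁) = {u}) :
    ∃ B : Finset V, B.card = Fintype.card V - G.minDegree ∧
      (∀ x ∈ B, ∀ y ∈ B, ¬ G.Adj x y) ∧ (∀ a ∉ B, ∀ b ∈ B, G.Adj a b) := by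
  classical
  set δ := G.minDegree with hδ
  set n := Fintype.card V with hn
  set U : Finset V := univ \ cnbhd G v₁ with hU
  set A : Finset V := G.neighborFinset v₁ with hA
  have hAcard : A.card = δ := by
    rw [hA, SimpleGraph.card_neighborFinset_eq_degree, hdeg]
  have hUcard : U.card = n - (δ + 1) := by
    rw [hU, card_sdiff_of_subset (subset_univ _), card_cnbhd, hdeg, card_univ]
  have hdegn : δ + 1 ≤ n := by
    have := card_le_card (subset_univ (cnbhd G v₁))
    rw [card_cnbhd, hdeg, card_univ] at this
    exact this
  -- membership facts
  have hmemU : ∀ x, x ∈ U ↔ x ∉ cnbhd G v₁ := by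
    intro x; rw [hU, mem_sdiff]; simp
  have hmemA : ∀ x, x ∈ A ↔ G.Adj v₁ x := by
    intro x; rw [hA, SimpleGraph.mem_neighborFinset]
  -- a vertex of U with no neighbor in U has neighborhood exactly A
  have hNA : ∀ u ∈ U, (¬ ∃ w ∈ U, G.Adj u w) → G.neighborFinset u = A := by
    intro u huU hno
    have hsub : G.neighborFinset u ⊆ A := by
      intro w hw
      rw [SimpleGraph.mem_neighborFinset] at hw
      by_cases hwU : w ∈ U
      · exact absurd ⟨w, hwU, hw⟩ hno
      · rw [hmemU, not_not, mem_cnbhd] at hwU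
        rcases hwU with heq | hadj
        · exfalso
          rw [heq] at hw
          exact (hmemU u).mp huU (mem_cnbhd.mpr (Or.inr hw.symm))
        · exact (hmemA w).mpr hadj
    have hcard : A.card ≤ (G.neighborFinset u).card := by
      rw [hAcard, SimpleGraph.card_neighborFinset_eq_degree]
      exact G.minDegree_le_degree u
    exact Finset.eq_of_subset_of_card_le hsub hcard
  -- U is independent
  have hind : ∀ x ∈ U, ∀ y ∈ U, ¬ G.Adj x y := by
    by_contra hcon
    push_neg at hcon
    obtain ⟨x, hx, y, hy, hxy⟩ := hcon
    set U₀ : Finset V := U.filter (fun z => ∃ w ∈ U, G.Adj z w) with hU₀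
    have hxU₀ : x ∈ U₀ := by
      rw [hU₀, mem_filter]; exact ⟨hx, y, hy, hxy⟩
    set g : V → V := fun z => if hz : z ∈ U then (hR z hz).choose else z
      with hg
    have hgspec : ∀ z ∈ U, g z ∈ cnbhd G z ∧ cnbhd G (g z) ∩ U = {z} := by
      intro z hz
      have hspec := (hR z hz).choose_spec
      rw [hg]
      simp only [dif_pos hz]
      exact hspec
    have hgA : ∀ z ∈ U₀, g z ∈ A := by
      intro z hz
      rw [hU₀, mem_filter] at hz
      obtain ⟨hzU, w, hwU, hzw⟩ := hz
      obtain ⟨hg1, hg2⟩ := hgspec z hzU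
      have hgzU : g z ∉ U := by
        intro hgz
        have : g z ∈ cnbhd G (g z) ∩ U :=
          Finset.mem_inter.mpr ⟨self_mem_cnbhd G (g z), hgz⟩
        rw [hg2, Finset.mem_singleton] at this
        have hw' : w ∈ cnbhd G (g z) ∩ U := by
          rw [this]
          exact Finset.mem_inter.mpr ⟨mem_cnbhd.mpr (Or.inr hzw), hwU⟩
        rw [hg2, Finset.mem_singleton] at hw'
        rw [hw'] at hzw
        exact G.loopless.irrefl z hzw
      rw [hmemU, not_not, mem_cnbhd] at hgzU
      rcases hgzU with heq | hadj
      · exfalso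
        have : z ∈ cnbhd G (g z) := cnbhd_comm.mp hg1
        rw [heq] at this
        exact (hmemU z).mp hzU this
      · exact (hmemA _).mpr hadj
    have hginj : Set.InjOn g ↑U₀ := by
      intro z hz z' hz' heq
      have h1 := (hgspec z (Finset.mem_of_mem_filter z hz)).2
      have h2 := (hgspec z' (Finset.mem_of_mem_filter z' hz')).2
      rw [heq, h2] at h1
      exact (Finset.singleton_inj.mp h1.symm)
    have hU₀card : U₀.card ≤ δ := by
      have := Finset.card_le_card_of_injOn g hgA hginj
      omega
    have hU₀sub : U₀ ⊆ U := filter_subset _ _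
    have hUdiff : 1 ≤ (U \ U₀).card := by
      rw [card_sdiff_of_subset hU₀sub]
      omega
    obtain ⟨z₀, hz₀⟩ := card_pos.mp (by omega : 0 < (U \ U₀).card)
    rw [mem_sdiff] at hz₀
    obtain ⟨hz₀U, hz₀n⟩ := hz₀
    have hz₀no : ¬ ∃ w ∈ U, G.Adj z₀ w := by
      intro hc
      exact hz₀n (by rw [hU₀, mem_filter]; exact ⟨hz₀U, hc⟩)
    have hNz := hNA z₀ hz₀U hz₀no
    -- g x ∈ A = N(z₀), so z₀ ∈ cnbhd (g x) ∩ U = {x}, contradiction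
    have hgxA : g x ∈ A := hgA x hxU₀
    have hadj : G.Adj z₀ (g x) := by
      rw [← SimpleGraph.mem_neighborFinset, hNz]
      exact hgxA
    have hz₀mem : z₀ ∈ cnbhd G (g x) ∩ U :=
      Finset.mem_inter.mpr ⟨mem_cnbhd.mpr (Or.inr hadj.symm), hz₀U⟩
    rw [(hgspec x hx).2, Finset.mem_singleton] at hz₀mem
    rw [hz₀mem] at hz₀n
    exact hz₀n hxU₀
  -- every vertex of U has neighborhood exactly A
  have hNU : ∀ u ∈ U, G.neighborFinset u = A := by
    intro u hu
    refine hNA u hu ?_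
    rintro ⟨w, hwU, hadj⟩
    exact hind u hu w hwU hadj
  -- assemble B
  have hv₁U : v₁ ∉ U := fun hc => (hmemU v₁).mp hc (self_mem_cnbhd G v₁)
  refine ⟨insert v₁ U, ?_, ?_, ?_⟩
  · rw [card_insert_of_notMem hv₁U, hUcard]
    omega
  · intro x hx y hy hadj
    rcases Finset.mem_insert.mp hx with rfl | hxU
    · rcases Finset.mem_insert.mp hy with rfl | hyU
      · exact G.loopless.irrefl _ hadj
      · exact (hmemU y).mp hyU (mem_cnbhd.mpr (Or.inr hadj))
    · rcases Finset.mem_insert.mp hy with rfl | hyU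
      · exact (hmemU x).mp hxU (mem_cnbhd.mpr (Or.inr hadj.symm))
      · exact hind x hxU y hyU hadj
  · intro a ha b hb
    have ha1 : a ≠ v₁ := fun hc => ha (hc ▸ Finset.mem_insert_self _ _)
    have ha2 : a ∉ U := fun hc => ha (Finset.mem_insert_of_mem hc)
    rw [hmemU, not_not, mem_cnbhd] at ha2
    have haA : G.Adj v₁ a := by
      rcases ha2 with rfl | hadj
      · exact absurd rfl ha1
      · exact hadj
    rcases Finset.mem_insert.mp hb with rfl | hbU
    · exact haA.symm
    · have : a ∈ G.neighborFinset b := by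
        rw [hNU b hbU]
        exact (hmemA a).mpr haA
      rw [SimpleGraph.mem_neighborFinset] at this
      exact this.symm

end Stmt4Aux

/-- for `n ≥ 2δ + 2`, `γᵢ(G) = n - δ` iff `G` has a spanning
complete bipartite subgraph `K_{δ, n-δ}` whose part `B` of size `n - δ` is
independent in `G`. -/
theorem stmt4 {V : Type*} [Fintype V] (G : SimpleGraph V)
    (h : 2 * G.minDegree + 2 ≤ Fintype.card V) :
    indicatedDomNum G = Fintype.card V - G.minDegree ↔
      ∃ B : Finset V, B.card = Fintype.card V - G.minDegree ∧
        (∀ x ∈ B, ∀ y ∈ B, ¬ G.Adj x y) ∧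
        (∀ a ∉ B, ∀ b ∈ B, G.Adj a b) := by
  classical
  haveI hV : Nonempty V := by
    rw [← Fintype.card_pos_iff]; omega
  obtain ⟨f, hf⟩ : ∃ f, Fintype.card V = f + 1 := ⟨Fintype.card V - 1, by omega⟩
  have hfuel : giAux G (Fintype.card V) ∅ = giAux G (f + 1) ∅ :=
    congrArg (fun k => giAux G k ∅) hf
  have hne0 : (undom G (∅ : Finset V)).Nonempty := by
    rw [undom_empty]; exact univ_nonempty
  constructor
  · -- forward direction
    intro hγ
    rw [indicatedDomNum, hfuel, giAux, dif_pos hne0] at hγ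
    obtain ⟨u₀, hu₀⟩ := hne0
    have h1 : (undom G (∅ : Finset V)).inf' ⟨u₀, hu₀⟩
        (fun u => (cnbhd G u).sup' ⟨u, Finset.mem_insert_self u _⟩
          fun v => giAux G f (insert v ∅) + 1) ≤
        (cnbhd G u₀).sup' ⟨u₀, Finset.mem_insert_self u₀ _⟩
          (fun v => giAux G f (insert v ∅) + 1) :=
      Finset.inf'_le _ hu₀
    rw [hγ] at h1
    obtain ⟨v₁, hv₁mem, hv₁eq⟩ := Finset.exists_mem_eq_sup'
      (⟨u₀, self_mem_cnbhd G u₀⟩ : (cnbhd G u₀).Nonempty)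
      (fun v => giAux G f (insert v ∅) + 1)
    rw [hv₁eq] at h1
    have hL1 := giAux_le_card G f (insert v₁ ∅)
    have hUeq : undom G (insert v₁ ∅) = univ \ cnbhd G v₁ := by
      rw [undom_insert, undom_empty]
    have hUcard : (undom G (insert v₁ ∅)).card =
        Fintype.card V - (G.degree v₁ + 1) := by
      rw [hUeq, card_sdiff_of_subset (subset_univ _), card_cnbhd, card_univ]
    have hdegle : G.minDegree ≤ G.degree v₁ := G.minDegree_le_degree v₁
    have hdegn : G.degree v₁ + 1 ≤ Fintype.card V := by
      have := card_le_card (subset_univ (cnbhd G v₁))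
      rw [card_cnbhd, card_univ] at this; exact this
    have hdeg : G.degree v₁ = G.minDegree := by omega
    have hfull : (undom G (insert v₁ ∅)).card ≤ giAux G f (insert v₁ ∅) := by
      omega
    obtain ⟨f', hf'⟩ : ∃ f', f = f' + 1 := ⟨f - 1, by omega⟩
    have hUne : (undom G (insert v₁ ∅)).Nonempty := by
      rw [← card_pos]; omega
    rw [hf'] at hfull
    have hR := full_imp_R G f' (insert v₁ ∅) hUne hfull
    rw [hUeq] at hR
    exact combinatorial G v₁ h hdeg hR
  · -- backward direction
    rintro ⟨B, hBcard, hBind, hBcompl⟩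
    have hBne : B.Nonempty := by
      rw [← card_pos, hBcard]; omega
    have hNb : ∀ b ∈ B, G.neighborFinset b = univ \ B := by
      intro b hb
      ext w
      rw [SimpleGraph.mem_neighborFinset, mem_sdiff]
      constructor
      · intro hadj
        exact ⟨mem_univ _, fun hwB => hBind b hb w hwB hadj⟩
      · rintro ⟨-, hwB⟩
        exact (hBcompl w hwB b hb).symm
    have hcnbhdb : ∀ b ∈ B, cnbhd G b = insert b (univ \ B) := by
      intro b hb; rw [cnbhd, hNb b hb]
    have hundomb : ∀ b ∈ B, undom G (insert b ∅) = B.erase b := by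
      intro b hb
      rw [undom_insert, undom_empty, hcnbhdb b hb]
      ext x
      simp only [mem_sdiff, mem_univ, true_and, Finset.mem_insert, mem_erase,
        not_or, not_and, not_not]
    rw [indicatedDomNum, hfuel, giAux, dif_pos hne0]
    apply le_antisymm
    · obtain ⟨u₀, hu₀⟩ := hne0
      refine le_trans (Finset.inf'_le _ hu₀) (Finset.sup'_le _ _ ?_)
      intro v hv
      have hle := giAux_le_card G f (insert v ∅)
      have hUc : (undom G (insert v ∅)).card =
          Fintype.card V - (G.degree v + 1) := by
        rw [undom_insert, undom_empty, card_sdiff_of_subset (subset_univ _), card_cnbhd,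
          card_univ]
      have h1 : G.minDegree ≤ G.degree v := G.minDegree_le_degree v
      have h2 : G.degree v + 1 ≤ Fintype.card V := by
        have := card_le_card (subset_univ (cnbhd G v))
        rw [card_cnbhd, card_univ] at this; exact this
      omega
    · apply Finset.le_inf'
      intro u₀ hu₀
      obtain ⟨b, hbB, hbmem⟩ : ∃ b ∈ B, b ∈ cnbhd G u₀ := by
        by_cases hu₀B : u₀ ∈ B
        · exact ⟨u₀, hu₀B, self_mem_cnbhd G u₀⟩
        · obtain ⟨b, hb⟩ := hBne
          exact ⟨b, hb, mem_cnbhd.mpr (Or.inr (hBcompl u₀ hu₀B b hb))⟩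
      have hub : undom G (insert b ∅) = B.erase b := hundomb b hbB
      have hRb : ∀ u ∈ undom G (insert b ∅), ∃ v ∈ cnbhd G u,
          cnbhd G v ∩ undom G (insert b ∅) = {u} := by
        intro u hu
        rw [hub] at hu
        obtain ⟨hub', huB⟩ := mem_erase.mp hu
        refine ⟨u, self_mem_cnbhd G u, ?_⟩
        rw [hub, hcnbhdb u huB]
        ext x
        simp only [Finset.mem_inter, Finset.mem_insert, mem_erase, mem_sdiff,
          mem_univ, true_and, Finset.mem_singleton]
        constructor
        · rintro ⟨hx1, hx2, hx3⟩
          rcases hx1 with rfl | hx1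
          · rfl
          · exact absurd hx3 hx1
        · rintro rfl
          exact ⟨Or.inl rfl, hub', huB⟩
      have hcard : (undom G (insert b ∅)).card =
          Fintype.card V - G.minDegree - 1 := by
        rw [hub, card_erase_of_mem hbB, hBcard]
      have hkey := card_le_giAux G f (insert b ∅) (by omega) hRb
      have hfin : Fintype.card V - G.minDegree ≤ giAux G f (insert b ∅) + 1 := by
        omega
      exact hfin.trans (Finset.le_sup' (fun v => giAux G f (insert v ∅) + 1) hbmem)

end IndicatedDom
end
end

section
/- For all n ≥ k ≥ 2, the indicated domination number of the k-th power of the path satisfies the lower bound γᵢ(P_n^k) ≥ (⌈log₂(k+1)⌉ + 1)·⌊n/(4k)⌋. -/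
open Finset

open scoped Classical

noncomputable section

namespace IndicatedDom

variable {V : Type*} [Fintype V]

/-! ### Auxiliary machinery for the lower bound on `γᵢ(P_n^k)` -/

section Stmt12Aux

lemma clog_half_step (l m : ℕ) (h : l ≤ 2*m+1) :
    Nat.clog 2 (l+1) ≤ Nat.clog 2 (m+1) + 1 := by
  have h2 : (2*m+2+2-1)/2 = m+1 := by omega
  calc Nat.clog 2 (l+1) ≤ Nat.clog 2 (2*m+2) := Nat.clog_mono_right _ (by omega)
    _ = Nat.clog 2 (m+1) + 1 := by rw [Nat.clog_of_two_le (by norm_num) (by omega), h2]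

lemma clog_double (k : ℕ) (hk : 1 ≤ k) : Nat.clog 2 (2*k+1) = Nat.clog 2 (k+1) + 1 := by
  have h2 : (2*k+1+2-1)/2 = k+1 := by omega
  rw [Nat.clog_of_two_le (by norm_num) (by omega), h2]

lemma mul_succ_le (k j j' : ℕ) (h : j < j') : 4*k*j + 4*k ≤ 4*k*j' := by
  have h1 := Nat.mul_le_mul_left (4*k) h
  rw [Nat.mul_succ] at h1
  exact h1

lemma mem_cnbhd_iff {G : SimpleGraph V} {u v : V} : v ∈ cnbhd G u ↔ v = u ∨ G.Adj u v := by
  simp [cnbhd, SimpleGraph.mem_neighborFinset]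

lemma cnbhd_symm {G : SimpleGraph V} {u v : V} (h : v ∈ cnbhd G u) : u ∈ cnbhd G v := by
  rw [mem_cnbhd_iff] at *
  rcases h with h | h
  · exact Or.inl h.symm
  · exact Or.inr h.symm

lemma mem_undom_iff {G : SimpleGraph V} {D : Finset V} {u : V} :
    u ∈ undom G D ↔ ∀ v ∈ D, u ∉ cnbhd G v := by
  simp [undom]

/-- Abstract lower-bound lemma for the indicated domination game: a Staller
strategy with bookkeeping state `σ`, invariant `Inv` and potential `φ` that
drops by at most one per move forces at least `φ s₀` moves. -/
lemma giAux_lower (G : SimpleGraph V) {σ : Type*} (Inv : Finset V → σ → Prop) (φ : σ → ℕ)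
    (hT : ∀ D s, Inv D s → undom G D = ∅ → φ s = 0)
    (hS : ∀ D s, Inv D s → ∀ u ∈ undom G D,
      ∃ v ∈ cnbhd G u, ∃ s', Inv (insert v D) s' ∧ φ s ≤ φ s' + 1) :
    ∀ (fuel : ℕ) (D : Finset V) (s : σ), Inv D s → Fintype.card V ≤ fuel + D.card →
      φ s ≤ giAux G fuel D := by
  intro fuel
  induction fuel with
  | zero =>
    intro D s hI hc
    have hD : D = univ :=
      Finset.eq_univ_of_card D (le_antisymm (Finset.card_le_univ D) (by simpa using hc))
    have hund : undom G D = ∅ := by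
      rw [Finset.eq_empty_iff_forall_notMem]
      intro x hx
      exact (mem_undom_iff.1 hx) x (hD ▸ Finset.mem_univ x) (Finset.mem_insert_self x _)
    rw [hT D s hI hund]
    exact Nat.zero_le _
  | succ fuel ih =>
    intro D s hI hc
    rw [giAux]
    split_ifs with h
    · apply Finset.le_inf'
      intro x hx
      obtain ⟨v, hv, s', hI', hφ⟩ := hS D s hI x hx
      have hvD : v ∉ D := fun hvD => (mem_undom_iff.1 hx) v hvD (cnbhd_symm hv)
      have hcard : (insert v D).card = D.card + 1 := Finset.card_insert_of_notMem hvD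
      have hrec := ih (insert v D) s' hI' (by omega)
      calc φ s ≤ φ s' + 1 := hφ
        _ ≤ giAux G fuel (insert v D) + 1 := by omega
        _ ≤ _ := Finset.le_sup' (fun w => giAux G fuel (insert w D) + 1) hv
    · rw [hT D s hI (Finset.not_nonempty_iff_eq_empty.1 h)]

end Stmt12Aux
section Stmt12Concrete

/-- `x` and `y` are within distance `k` on the path. -/
def near (k x y : ℕ) : Prop := x ≤ y + k ∧ y ≤ x + k

lemma near_def {k x y : ℕ} : near k x y ↔ (x ≤ y + k ∧ y ≤ x + k) := Iff.rfl

lemma near_symm {k x y : ℕ} (h : near k x y) : near k y x := ⟨h.2, h.1⟩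

/-- Position `y` is dominated by the selected set `D`. -/
def Doms (n k : ℕ) (D : Finset (Fin n)) (y : ℕ) : Prop := ∃ d ∈ D, near k y (d : ℕ)

lemma Doms.mono {n k : ℕ} {D : Finset (Fin n)} {v : Fin n} {y : ℕ} (h : Doms n k D y) :
    Doms n k (insert v D) y := by
  obtain ⟨d, hd, hnd⟩ := h
  exact ⟨d, Finset.mem_insert_of_mem hd, hnd⟩

lemma mem_cnbhd_pathPow {n k : ℕ} {u v : Fin n} :
    u ∈ cnbhd (pathPow n k) v ↔ near k (u:ℕ) (v:ℕ) := by
  rw [mem_cnbhd_iff]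
  constructor
  · rintro (rfl | ⟨hne, h1, h2⟩)
    · exact ⟨Nat.le_add_right _ _, Nat.le_add_right _ _⟩
    · exact ⟨h2, h1⟩
  · rintro ⟨h1, h2⟩
    by_cases he : u = v
    · exact Or.inl he
    · exact Or.inr ⟨fun e => he e.symm, h2, h1⟩

/-- Staller's invariant: in each of the `⌊n/(4k)⌋` blocks there is a "protected"
interval `[(f j).1, (f j).2)` of undominated vertices inside the middle part of
the block, and every shrunk end of a protected interval is shielded by a
dominated buffer of `2k+1` vertices. -/
def RInv (n k : ℕ) (D : Finset (Fin n)) (f : ℕ → ℕ × ℕ) : Prop :=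
  ∀ j, j < n/(4*k) →
    (4*k*j + k ≤ (f j).1 ∧ (f j).1 ≤ (f j).2 ∧ (f j).2 ≤ 4*k*j + 3*k) ∧
    (∀ x : ℕ, (f j).1 ≤ x → x < (f j).2 → ¬ Doms n k D x) ∧
    ((f j).1 = 4*k*j + k ∨ ∀ y : ℕ, y < (f j).1 → (f j).1 ≤ y + 2*k + 1 → Doms n k D y) ∧
    ((f j).2 = 4*k*j + 3*k ∨ ∀ y : ℕ, (f j).2 ≤ y → y ≤ (f j).2 + 2*k → Doms n k D y)

/-- Staller's potential. -/
def Phi (n k : ℕ) (f : ℕ → ℕ × ℕ) : ℕ :=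
  ∑ j ∈ Finset.range (n/(4*k)), Nat.clog 2 ((f j).2 - (f j).1 + 1)

lemma block_le {n k j : ℕ} (hj : j < n/(4*k)) : 4*k*j + 4*k ≤ n := by
  have h1 : 4*k*(j+1) ≤ 4*k*(n/(4*k)) := Nat.mul_le_mul_left _ hj
  have h2 : n/(4*k)*(4*k) ≤ n := Nat.div_mul_le_self n (4*k)
  rw [Nat.mul_add, Nat.mul_one] at h1
  rw [Nat.mul_comm] at h2
  omega

lemma RInv_sep {n k : ℕ} {D : Finset (Fin n)} {f : ℕ → ℕ × ℕ} (hI : RInv n k D f)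
    {j j' : ℕ} (h : j < j') (h' : j' < n/(4*k)) : (f j).2 + 2*k ≤ (f j').1 := by
  have h1 := (hI j (h.trans h')).1
  have h2 := (hI j' h').1
  have h3 := mul_succ_le k j j' h
  omega

lemma Phi_update_le (n k : ℕ) (f : ℕ → ℕ × ℕ) (j₀ : ℕ) (p : ℕ × ℕ)
    (h : Nat.clog 2 ((f j₀).2 - (f j₀).1 + 1) ≤ Nat.clog 2 (p.2 - p.1 + 1) + 1) :
    Phi n k f ≤ Phi n k (Function.update f j₀ p) + 1 := by
  unfold Phi
  by_cases hj : j₀ ∈ Finset.range (n/(4*k))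
  · rw [← Finset.add_sum_erase _ _ hj, ← Finset.add_sum_erase _ _ hj]
    have he : ∑ j ∈ (Finset.range (n/(4*k))).erase j₀,
          Nat.clog 2 ((Function.update f j₀ p j).2 - (Function.update f j₀ p j).1 + 1)
        = ∑ j ∈ (Finset.range (n/(4*k))).erase j₀, Nat.clog 2 ((f j).2 - (f j).1 + 1) := by
      apply Finset.sum_congr rfl
      intro j hjj
      rw [Function.update_of_ne (Finset.ne_of_mem_erase hjj)]
    rw [he, Function.update_self]
    omega
  · have he : ∀ j ∈ Finset.range (n/(4*k)), Nat.clog 2 ((Function.update f j₀ p j).2 - (Function.update f j₀ p j).1 + 1)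
        = Nat.clog 2 ((f j).2 - (f j).1 + 1) := by
      intro j hjj
      rw [Function.update_of_ne (by rintro rfl; exact hj hjj)]
    rw [Finset.sum_congr rfl he]
    omega

/-- Inserting a vertex whose closed neighbourhood misses all protected
intervals preserves the invariant. -/
lemma RInv_insert_keep {n k : ℕ} {D : Finset (Fin n)} {f : ℕ → ℕ × ℕ} (hI : RInv n k D f)
    (v : Fin n)
    (hv : ∀ j, j < n/(4*k) → ∀ x : ℕ, (f j).1 ≤ x → x < (f j).2 → ¬ near k x (v:ℕ)) :
    RInv n k (insert v D) f := by
  intro j hj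
  obtain ⟨ha, hb, hcl, hcr⟩ := hI j hj
  refine ⟨ha, ?_, ?_, ?_⟩
  · intro x hx1 hx2 hD
    obtain ⟨d, hd, hnd⟩ := hD
    rcases Finset.mem_insert.1 hd with rfl | hd
    · exact hv j hj x hx1 hx2 hnd
    · exact hb x hx1 hx2 ⟨d, hd, hnd⟩
  · rcases hcl with h | h
    · exact Or.inl h
    · exact Or.inr fun y h1 h2 => (h y h1 h2).mono
  · rcases hcr with h | h
    · exact Or.inl h
    · exact Or.inr fun y h1 h2 => (h y h1 h2).mono

/-- Staller's halving move, keeping the left part `[(f j₀).1, u')` of the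
protected interval of block `j₀`. -/
lemma RInv_insert_halveR {n k : ℕ} {D : Finset (Fin n)} {f : ℕ → ℕ × ℕ} (hI : RInv n k D f)
    (v : Fin n) (j₀ : ℕ) (hj₀ : j₀ < n/(4*k)) (u' : ℕ)
    (hu1 : (f j₀).1 ≤ u') (hu2 : u' < (f j₀).2)
    (hoth : ∀ j, j < n/(4*k) → j ≠ j₀ → ∀ x : ℕ, (f j).1 ≤ x → x < (f j).2 → ¬ near k x (v:ℕ))
    (hwin : ∀ y : ℕ, u' ≤ y → y ≤ u' + 2*k → near k y (v:ℕ))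
    (hav : ∀ x : ℕ, x < u' → ¬ near k x (v:ℕ)) :
    RInv n k (insert v D) (Function.update f j₀ ((f j₀).1, u')) := by
  intro j hj
  rcases eq_or_ne j j₀ with rfl | hjj
  · rw [Function.update_self]
    obtain ⟨ha, hb, hcl, hcr⟩ := hI j hj
    refine ⟨⟨ha.1, by simp; omega, by simp; omega⟩, ?_, ?_, ?_⟩
    · intro x hx1 hx2 hD
      simp only at hx1 hx2
      obtain ⟨d, hd, hnd⟩ := hD
      rcases Finset.mem_insert.1 hd with rfl | hd
      · exact hav x hx2 hnd
      · exact hb x hx1 (by omega) ⟨d, hd, hnd⟩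
    · rcases hcl with h | h
      · exact Or.inl h
      · exact Or.inr fun y h1 h2 => (h y h1 h2).mono
    · exact Or.inr fun y h1 h2 => ⟨v, Finset.mem_insert_self _ _, hwin y h1 h2⟩
  · rw [Function.update_of_ne hjj]
    obtain ⟨ha, hb, hcl, hcr⟩ := hI j hj
    refine ⟨ha, ?_, ?_, ?_⟩
    · intro x hx1 hx2 hD
      obtain ⟨d, hd, hnd⟩ := hD
      rcases Finset.mem_insert.1 hd with rfl | hd
      · exact hoth j hj hjj x hx1 hx2 hnd
      · exact hb x hx1 hx2 ⟨d, hd, hnd⟩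
    · rcases hcl with h | h
      · exact Or.inl h
      · exact Or.inr fun y h1 h2 => (h y h1 h2).mono
    · rcases hcr with h | h
      · exact Or.inl h
      · exact Or.inr fun y h1 h2 => (h y h1 h2).mono

/-- Staller's halving move, keeping the right part `[u'+1, (f j₀).2)` of the
protected interval of block `j₀`. -/
lemma RInv_insert_halveL {n k : ℕ} {D : Finset (Fin n)} {f : ℕ → ℕ × ℕ} (hI : RInv n k D f)
    (v : Fin n) (j₀ : ℕ) (hj₀ : j₀ < n/(4*k)) (u' : ℕ)
    (hu1 : (f j₀).1 ≤ u') (hu2 : u' < (f j₀).2)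
    (hoth : ∀ j, j < n/(4*k) → j ≠ j₀ → ∀ x : ℕ, (f j).1 ≤ x → x < (f j).2 → ¬ near k x (v:ℕ))
    (hwin : ∀ y : ℕ, y ≤ u' → u' ≤ y + 2*k → near k y (v:ℕ))
    (hav : ∀ x : ℕ, u' < x → ¬ near k x (v:ℕ)) :
    RInv n k (insert v D) (Function.update f j₀ (u' + 1, (f j₀).2)) := by
  intro j hj
  rcases eq_or_ne j j₀ with rfl | hjj
  · rw [Function.update_self]
    obtain ⟨ha, hb, hcl, hcr⟩ := hI j hj
    refine ⟨⟨by simp; omega, by simp; omega, by simp; omega⟩, ?_, ?_, ?_⟩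
    · intro x hx1 hx2 hD
      simp only at hx1 hx2
      obtain ⟨d, hd, hnd⟩ := hD
      rcases Finset.mem_insert.1 hd with rfl | hd
      · exact hav x (by omega) hnd
      · exact hb x (by omega) hx2 ⟨d, hd, hnd⟩
    · refine Or.inr fun y h1 h2 => ⟨v, Finset.mem_insert_self _ _, hwin y (by simp at h1; omega) (by simp at h2; omega)⟩
    · rcases hcr with h | h
      · exact Or.inl h
      · exact Or.inr fun y h1 h2 => (h y h1 h2).mono
  · rw [Function.update_of_ne hjj]
    obtain ⟨ha, hb, hcl, hcr⟩ := hI j hj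
    refine ⟨ha, ?_, ?_, ?_⟩
    · intro x hx1 hx2 hD
      obtain ⟨d, hd, hnd⟩ := hD
      rcases Finset.mem_insert.1 hd with rfl | hd
      · exact hoth j hj hjj x hx1 hx2 hnd
      · exact hb x hx1 hx2 ⟨d, hd, hnd⟩
    · rcases hcl with h | h
      · exact Or.inl h
      · exact Or.inr fun y h1 h2 => (h y h1 h2).mono
    · rcases hcr with h | h
      · exact Or.inl h
      · exact Or.inr fun y h1 h2 => (h y h1 h2).mono

/-- No undominated vertex of the middle part of a block lies outside the
protected interval. -/
lemma core_mem {n k : ℕ} {D : Finset (Fin n)} {f : ℕ → ℕ × ℕ} (hI : RInv n k D f)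
    {j P : ℕ} (hj : j < n/(4*k)) (h1 : 4*k*j + k ≤ P) (h2 : P < 4*k*j + 3*k)
    (hu : ¬ Doms n k D P) : (f j).1 ≤ P ∧ P < (f j).2 := by
  obtain ⟨ha, hb, hcl, hcr⟩ := hI j hj
  constructor
  · by_contra hcon
    push_neg at hcon
    rcases hcl with e | hbuf
    · omega
    · exact hu (hbuf P (by omega) (by omega))
  · by_contra hcon
    push_neg at hcon
    rcases hcr with e | hbuf
    · exact absurd h2 (by omega)
    · exact hu (hbuf P (by omega) (by omega))

end Stmt12Concrete
section Stmt12Step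

/-- Staller's response: to any undominated indicated vertex `u` she has a reply
`v` within distance `k` that preserves the invariant and loses at most one unit
of potential. -/
lemma staller_step {n k : ℕ} (hk : 2 ≤ k) {D : Finset (Fin n)} {f : ℕ → ℕ × ℕ}
    (hI : RInv n k D f) (u : Fin n) (hu : ¬ Doms n k D (u:ℕ)) :
    ∃ v : Fin n, near k (u:ℕ) (v:ℕ) ∧
      ∃ f', RInv n k (insert v D) f' ∧ Phi n k f ≤ Phi n k f' + 1 := by
  set P := (u:ℕ) with hPdef
  have hPn : P < n := u.isLt
  by_cases hrun : ∃ j, j < (n/(4*k)) ∧ (f j).1 ≤ P ∧ P < (f j).2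
  · -- Case 1: Dominator indicated a vertex of a protected interval; halve it.
    obtain ⟨j, hj, hP1, hP2⟩ := hrun
    obtain ⟨⟨ha1, ha2, ha3⟩, hb, hcl, hcr⟩ := hI j hj
    have hbl := block_le hj
    by_cases hside : (f j).2 ≤ P + (P - (f j).1) + 1
    · -- keep the left part, v = P + k
      have hvlt : P + k < n := by omega
      refine ⟨⟨P + k, hvlt⟩, by simp only [near_def, Fin.val_mk]; omega,
        Function.update f j ((f j).1, P), ?_, ?_⟩
      · refine RInv_insert_halveR hI _ j hj P hP1 hP2 ?_ ?_ ?_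
        · intro j' hj' hne x hx1 hx2
          simp only [near_def, Fin.val_mk]
          rcases Nat.lt_or_ge j' j with hlt | hge
          · have hsep := RInv_sep hI hlt hj
            omega
          · have hlt : j < j' := by omega
            have hsep := RInv_sep hI hlt hj'
            omega
        · intro y h1 h2; simp only [near_def, Fin.val_mk]; omega
        · intro x hx; simp only [near_def, Fin.val_mk]; omega
      · apply Phi_update_le
        apply clog_half_step
        omega
    · -- keep the right part, v = P - k
      refine ⟨⟨P - k, by omega⟩, by simp only [near_def, Fin.val_mk]; omega,
        Function.update f j (P + 1, (f j).2), ?_, ?_⟩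
      · refine RInv_insert_halveL hI _ j hj P hP1 hP2 ?_ ?_ ?_
        · intro j' hj' hne x hx1 hx2
          simp only [near_def, Fin.val_mk]
          rcases Nat.lt_or_ge j' j with hlt | hge
          · have hsep := RInv_sep hI hlt hj
            omega
          · have hlt : j < j' := by omega
            have hsep := RInv_sep hI hlt hj'
            omega
        · intro y h1 h2; simp only [near_def, Fin.val_mk]; omega
        · intro x hx; simp only [near_def, Fin.val_mk]; omega
      · apply Phi_update_le
        apply clog_half_step
        omega
  · push_neg at hrun
    by_cases hB0 : (n/(4*k)) = 0
    · refine ⟨u, ⟨Nat.le_add_right _ _, Nat.le_add_right _ _⟩, f,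
        RInv_insert_keep hI u ?_, Nat.le_succ _⟩
      intro j hj
      exact absurd hj (by rw [hB0]; exact Nat.not_lt_zero j)
    have hB1 : 0 < (n/(4*k)) := Nat.pos_of_ne_zero hB0
    by_cases hPk : P < k
    · -- Case 2a: u is to the left of the first block's middle part; v = 0.
      obtain ⟨⟨ha1, ha2, ha3⟩, hb, hcl, hcr⟩ := hI 0 hB1
      simp only [Nat.mul_zero, Nat.zero_add] at ha1 ha2 ha3 hb hcl hcr
      have hoth0 : ∀ j', j' < (n/(4*k)) → j' ≠ 0 → ∀ x : ℕ, (f j').1 ≤ x → x < (f j').2 →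
          ¬ near k x ((⟨0, by omega⟩ : Fin n):ℕ) := by
        intro j' hj' hne x hx1 hx2
        have hb' := (hI j' hj').1
        have hm : 4*k*1 ≤ 4*k*j' := Nat.mul_le_mul_left _ (by omega)
        rw [Nat.mul_one] at hm
        simp only [near_def, Fin.val_mk]
        omega
      by_cases hsplit : (f 0).1 = k ∧ (f 0).1 < (f 0).2
      · refine ⟨⟨0, by omega⟩, by simp only [near_def, Fin.val_mk]; omega,
          Function.update f 0 ((f 0).1 + 1, (f 0).2), ?_, ?_⟩
        · refine RInv_insert_halveL hI _ 0 hB1 (f 0).1 le_rfl hsplit.2 hoth0 ?_ ?_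
          · intro y h1 h2; simp only [near_def, Fin.val_mk]; omega
          · intro x hx; simp only [near_def, Fin.val_mk]; omega
        · apply Phi_update_le
          apply clog_half_step
          omega
      · refine ⟨⟨0, by omega⟩, by simp only [near_def, Fin.val_mk]; omega, f, ?_, Nat.le_succ _⟩
        refine RInv_insert_keep hI _ ?_
        intro j' hj' x hx1 hx2
        rcases eq_or_ne j' 0 with rfl | hne
        · simp only [near_def, Fin.val_mk]
          omega
        · exact hoth0 j' hj' hne x hx1 hx2
    by_cases hPc : 4*k*(n/(4*k)) ≤ P + k
    · -- Case 2c: u is to the right of the last block's middle part.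
      obtain ⟨⟨ha1, ha2, ha3⟩, hb, hcl, hcr⟩ := hI ((n/(4*k))-1) (by omega)
      have heq : 4*k*((n/(4*k))-1) + 4*k = 4*k*(n/(4*k)) := by
        have h' : (n/(4*k)) - 1 + 1 = (n/(4*k)) := by omega
        calc 4*k*((n/(4*k))-1) + 4*k = 4*k*(((n/(4*k))-1)+1) := by rw [Nat.mul_add, Nat.mul_one]
          _ = 4*k*(n/(4*k)) := by rw [h']
      have hbl := block_le (show (n/(4*k))-1 < (n/(4*k)) by omega)
      have hsepc : ∀ j', j' < (n/(4*k)) - 1 → (f j').2 + 2*k ≤ (f ((n/(4*k))-1)).1 :=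
        fun j' h => RInv_sep hI h (by omega)
      by_cases hα : (f ((n/(4*k))-1)).2 + 2*k ≤ P
      · refine ⟨⟨P - k, by omega⟩, by simp only [near_def, Fin.val_mk]; omega, f, ?_, Nat.le_succ _⟩
        refine RInv_insert_keep hI _ ?_
        intro j' hj' x hx1 hx2
        simp only [near_def, Fin.val_mk]
        rcases Nat.lt_or_ge j' ((n/(4*k))-1) with hlt | hge
        · have := hsepc j' hlt
          omega
        · have : j' = (n/(4*k)) - 1 := by omega
          subst this
          omega
      · have hbb : (f ((n/(4*k))-1)).2 = 4*k*((n/(4*k))-1) + 3*k := by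
          rcases hcr with e | hbuf
          · exact e
          · exact absurd (hbuf P (by omega) (by omega)) hu
        by_cases hn4 : 4*k*(n/(4*k)) < n
        · refine ⟨⟨4*k*(n/(4*k)), hn4⟩, by simp only [near_def, Fin.val_mk]; omega, f, ?_, Nat.le_succ _⟩
          refine RInv_insert_keep hI _ ?_
          intro j' hj' x hx1 hx2
          have hbj' := (hI j' hj').1
          have hm := mul_succ_le k j' (n/(4*k)) hj'
          simp only [near_def, Fin.val_mk]
          omega
        · have hn4' : n = 4*k*(n/(4*k)) := by omega
          by_cases hne : (f ((n/(4*k))-1)).1 < (f ((n/(4*k))-1)).2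
          · refine ⟨⟨n - 1, by omega⟩, by simp only [near_def, Fin.val_mk]; omega,
              Function.update f ((n/(4*k))-1) ((f ((n/(4*k))-1)).1, (f ((n/(4*k))-1)).2 - 1), ?_, ?_⟩
            · refine RInv_insert_halveR hI _ ((n/(4*k))-1) (by omega) ((f ((n/(4*k))-1)).2 - 1)
                (by omega) (by omega) ?_ ?_ ?_
              · intro j' hj' hjne x hx1 hx2
                have hlt : j' < (n/(4*k)) - 1 := by omega
                have := hsepc j' hlt
                simp only [near_def, Fin.val_mk]
                omega
              · intro y h1 h2; simp only [near_def, Fin.val_mk]; omega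
              · intro x hx; simp only [near_def, Fin.val_mk]; omega
            · apply Phi_update_le
              apply clog_half_step
              omega
          · refine ⟨⟨n - 1, by omega⟩, by simp only [near_def, Fin.val_mk]; omega, f, ?_, Nat.le_succ _⟩
            refine RInv_insert_keep hI _ ?_
            intro j' hj' x hx1 hx2
            rcases Nat.lt_or_ge j' ((n/(4*k))-1) with hlt | hge
            · have := hsepc j' hlt
              simp only [near_def, Fin.val_mk]
              omega
            · have : j' = (n/(4*k)) - 1 := by omega
              subst this
              omega
    · -- Case 2b: u lies in a gap between two consecutive blocks' middle parts.
      push_neg at hPk hPc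
      have hP3 : 3*k ≤ P := by
        by_contra hcon
        push_neg at hcon
        have hc := core_mem hI hB1 (P := P)
          (by simp only [Nat.mul_zero, Nat.zero_add]; omega)
          (by simp only [Nat.mul_zero, Nat.zero_add]; omega) hu
        exact absurd (hrun 0 hB1 hc.1) (by omega)
      set j := (P - 3*k)/(4*k) with hjdef
      have hdm := Nat.div_add_mod (P - 3*k) (4*k)
      have hmod : (P - 3*k) % (4*k) < 4*k := Nat.mod_lt _ (by omega)
      rw [← hjdef] at hdm
      have hjl : 4*k*j + 3*k ≤ P := by omega
      have hjr : P < 4*k*j + 7*k := by omega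
      have hmulj : 4*k*(j+1) = 4*k*j + 4*k := by rw [Nat.mul_add, Nat.mul_one]
      have hjB : j + 1 < (n/(4*k)) := by
        have h4 : 4*k*(j+1) < 4*k*(n/(4*k)) := by omega
        exact Nat.lt_of_mul_lt_mul_left h4
      have hj : j < (n/(4*k)) := by omega
      have hj5 : P < 4*k*j + 5*k := by
        by_contra hcon
        push_neg at hcon
        have hc := core_mem hI hjB (P := P) (by omega) (by omega) hu
        exact absurd (hrun (j+1) hjB hc.1) (by omega)
      obtain ⟨⟨hja1, hja2, hja3⟩, hjb, hjcl, hjcr⟩ := hI j hj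
      obtain ⟨⟨hA1, hA2, hA3⟩, hAb, hAcl, hAcr⟩ := hI (j+1) hjB
      rw [hmulj] at hA1 hA3
      have hblA := block_le hjB
      rw [hmulj] at hblA
      by_cases hα : (f j).2 + 2*k ≤ P
      · refine ⟨⟨P - k, by omega⟩, by simp only [near_def, Fin.val_mk]; omega, f, ?_, Nat.le_succ _⟩
        refine RInv_insert_keep hI _ ?_
        intro j'' hj'' x hx1 hx2
        simp only [near_def, Fin.val_mk]
        rcases Nat.lt_or_ge j'' j with hlt | hge
        · have := RInv_sep hI hlt hj
          omega
        rcases Nat.eq_or_lt_of_le hge with rfl | hgt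
        · omega
        rcases Nat.eq_or_lt_of_le hgt with heqq | hgt2
        · have : j'' = j + 1 := heqq.symm
          subst this
          omega
        · have := RInv_sep hI (show j+1 < j'' by omega) hj''
          omega
      · have hbj : (f j).2 = 4*k*j + 3*k := by
          rcases hjcr with e | hbuf
          · exact e
          · exact absurd (hbuf P (by omega) (by omega)) hu
        by_cases hβ : P + 2*k + 2 ≤ (f (j+1)).1
        · refine ⟨⟨P + k, by omega⟩, by simp only [near_def, Fin.val_mk]; omega, f, ?_, Nat.le_succ _⟩
          refine RInv_insert_keep hI _ ?_
          intro j'' hj'' x hx1 hx2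
          simp only [near_def, Fin.val_mk]
          rcases Nat.lt_or_ge j'' j with hlt | hge
          · have := RInv_sep hI hlt hj
            omega
          rcases Nat.eq_or_lt_of_le hge with rfl | hgt
          · omega
          rcases Nat.eq_or_lt_of_le hgt with heqq | hgt2
          · have : j'' = j + 1 := heqq.symm
            subst this
            omega
          · have := RInv_sep hI (show j+1 < j'' by omega) hj''
            omega
        · have haj1 : (f (j+1)).1 = 4*k*j + 5*k := by
            rcases hAcl with e | hbuf
            · omega
            · exact absurd (hbuf P (by omega) (by omega)) hu
          have hothγ : ∀ j'', j'' < (n/(4*k)) → j'' ≠ j + 1 → ∀ x : ℕ, (f j'').1 ≤ x → x < (f j'').2 →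
              ¬ near k x ((⟨4*k*j + 4*k, by omega⟩ : Fin n):ℕ) := by
            intro j'' hj'' hjne x hx1 hx2
            simp only [near_def, Fin.val_mk]
            rcases Nat.lt_or_ge j'' j with hlt | hge
            · have := RInv_sep hI hlt hj
              omega
            rcases Nat.eq_or_lt_of_le hge with rfl | hgt
            · omega
            · have hgt2 : j + 1 < j'' := by omega
              have := RInv_sep hI (show j < j+1 by omega) hjB
              have h2 := RInv_sep hI hgt2 hj''
              omega
          by_cases hne : (f (j+1)).1 < (f (j+1)).2
          · refine ⟨⟨4*k*j + 4*k, by omega⟩, by simp only [near_def, Fin.val_mk]; omega,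
              Function.update f (j+1) ((f (j+1)).1 + 1, (f (j+1)).2), ?_, ?_⟩
            · refine RInv_insert_halveL hI _ (j+1) hjB (f (j+1)).1 le_rfl hne hothγ ?_ ?_
              · intro y h1 h2; simp only [near_def, Fin.val_mk]; omega
              · intro x hx; simp only [near_def, Fin.val_mk]; omega
            · apply Phi_update_le
              apply clog_half_step
              omega
          · refine ⟨⟨4*k*j + 4*k, by omega⟩, by simp only [near_def, Fin.val_mk]; omega,
              f, ?_, Nat.le_succ _⟩
            refine RInv_insert_keep hI _ ?_
            intro j'' hj'' x hx1 hx2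
            rcases eq_or_ne j'' (j+1) with rfl | hjne
            · omega
            · exact hothγ j'' hj'' hjne x hx1 hx2

end Stmt12Step
section Stmt12Final

lemma RInv_terminal {n k : ℕ} {D : Finset (Fin n)} {f : ℕ → ℕ × ℕ} (hI : RInv n k D f)
    (hdom : ∀ x : Fin n, Doms n k D (x:ℕ)) : Phi n k f = 0 := by
  unfold Phi
  apply Finset.sum_eq_zero
  intro j hj
  rw [Finset.mem_range] at hj
  obtain ⟨⟨ha1, ha2, ha3⟩, hb, _, _⟩ := hI j hj
  have hbl := block_le hj
  have hee : (f j).2 ≤ (f j).1 := by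
    by_contra hcon
    push_neg at hcon
    have hlt : (f j).1 < n := by omega
    exact hb (f j).1 le_rfl hcon (hdom ⟨(f j).1, hlt⟩)
  have h1 : (f j).2 - (f j).1 + 1 = 1 := by omega
  rw [h1]
  exact Nat.clog_one_right 2

def f0 (k : ℕ) : ℕ → ℕ × ℕ := fun j => (4*k*j + k, 4*k*j + 3*k)

lemma RInv_init (n k : ℕ) : RInv n k ∅ (f0 k) := by
  intro j hj
  refine ⟨⟨le_rfl, by simp only [f0]; omega, le_rfl⟩, ?_, Or.inl rfl, Or.inl rfl⟩
  rintro x _ _ ⟨d, hd, -⟩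
  exact absurd hd (Finset.notMem_empty d)

lemma Phi_init (n k : ℕ) (hk : 1 ≤ k) :
    Phi n k (f0 k) = (n/(4*k)) * (Nat.clog 2 (k+1) + 1) := by
  unfold Phi f0
  calc ∑ j ∈ Finset.range (n/(4*k)), Nat.clog 2 ((4*k*j+3*k) - (4*k*j+k) + 1)
      = ∑ _j ∈ Finset.range (n/(4*k)), (Nat.clog 2 (k+1) + 1) := by
        refine Finset.sum_congr rfl fun j _ => ?_
        have h1 : (4*k*j + 3*k) - (4*k*j + k) + 1 = 2*k+1 := by omega
        rw [h1, clog_double k hk]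
    _ = (n/(4*k)) * (Nat.clog 2 (k+1)+1) := by
        rw [Finset.sum_const, Finset.card_range, smul_eq_mul]

end Stmt12Final
/-- for `n ≥ k ≥ 2`,
`γᵢ(P_n^k) ≥ (⌈log₂(k+1)⌉ + 1) ⋅ ⌊n/(4k)⌋`. -/
theorem stmt12 (n k : ℕ) (hk : 2 ≤ k) (hn : k ≤ n) :
    (Nat.clog 2 (k + 1) + 1) * (n / (4 * k)) ≤ indicatedDomNum (pathPow n k) := by
  have key := giAux_lower (pathPow n k) (RInv n k) (Phi n k) ?hT ?hS
    (Fintype.card (Fin n)) ∅ (f0 k) (RInv_init n k) (by simp)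
  · calc (Nat.clog 2 (k+1)+1) * (n/(4*k)) = Phi n k (f0 k) := by
          rw [Phi_init n k (by omega), Nat.mul_comm]
      _ ≤ _ := key
  case hT =>
    intro D s hI hund
    apply RInv_terminal hI
    intro x
    have hx : x ∉ undom (pathPow n k) D := by rw [hund]; exact Finset.notMem_empty x
    rw [mem_undom_iff] at hx
    push_neg at hx
    obtain ⟨v, hv, hxv⟩ := hx
    exact ⟨v, hv, mem_cnbhd_pathPow.1 hxv⟩
  case hS =>
    intro D s hI u hu
    rw [mem_undom_iff] at hu
    have hu' : ¬ Doms n k D (u:ℕ) := by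
      rintro ⟨d, hd, hnear⟩
      exact hu d hd (mem_cnbhd_pathPow.2 hnear)
    obtain ⟨v, hnear, f', hI', hφ⟩ := staller_step hk hI u hu'
    refine ⟨v, mem_cnbhd_pathPow.2 (near_symm hnear), f', ?_, hφ⟩
    convert hI' using 3

end IndicatedDom
end
end
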